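/- Let c ∈ (−1, 1), let P be the product of two copies of the standard Gaussian measure on ℝ (the law of independent standard normals Z₁, Z₂), and set U = Z₁ and V = c·Z₁ + √(1−c²)·Z₂, so that (U, V) is bivariate normal with standard margins and correlation c. Then U and V are asymptotically independent in the upper tail: P(U > t and V > t) / P(U > t) → 0 as t → ∞. -/

import Mathlib

open MeasureTheory ProbabilityTheory Filter Real


lemma DR_prod_gaussian :
    (gaussianReal 0 1).prod (gaussianReal 0 1) =
      ((volume : Measure ℝ).prod volume).withDensity
        (fun z => gaussianPDF 0 1 z.1 * gaussianPDF 0 1 z.2) := by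
  refine Measure.prod_eq fun s t hs ht => ?_
  rw [withDensity_apply _ (hs.prod ht), ← Measure.prod_restrict,
    lintegral_prod_mul (measurable_gaussianPDF 0 1).aemeasurable
      (measurable_gaussianPDF 0 1).aemeasurable,
    gaussianReal_of_var_ne_zero 0 one_ne_zero, withDensity_apply _ hs, withDensity_apply _ ht]

-- key Cauchy-Schwarz step
lemma DR_key (c t x y : ℝ) (hc : -1 < c) (hc' : c < 1) (ht : 0 ≤ t)
    (hx : t < x) (hy : t < c * x + Real.sqrt (1 - c ^ 2) * y) :
    2 * t ^ 2 ≤ (1 + c) * (x ^ 2 + y ^ 2) := by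
  set s := Real.sqrt (1 - c ^ 2) with hs
  have hs2 : s ^ 2 = 1 - c ^ 2 := Real.sq_sqrt (by nlinarith)
  have hw : 2 * t < (1 + c) * x + s * y := by nlinarith
  nlinarith [sq_nonneg (s * x - (1 + c) * y), sq_nonneg ((1+c)*x + s*y - 2*t)]

lemma DR_numer (c : ℝ) (hc : -1 < c) (hc' : c < 1) (t : ℝ) (ht : 0 ≤ t) :
    (((gaussianReal 0 1).prod (gaussianReal 0 1))
        {z : ℝ × ℝ | t < z.1 ∧ t < c * z.1 + Real.sqrt (1 - c ^ 2) * z.2}).toReal ≤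
      4 / (1 - c) * rexp (-((3 + c) / (4 * (1 + c))) * t ^ 2) := by
  have h1c : (0:ℝ) < 1 + c := by linarith
  have h1c' : (0:ℝ) < 1 - c := by linarith
  set a : ℝ := (3 + c) / (4 * (1 + c)) with ha_def
  set b : ℝ := (1 - c) / 8 with hb_def
  have hb : (0:ℝ) < b := by positivity
  have ha0 : 0 ≤ a := div_nonneg (by linarith) (by linarith)
  have ha : a * (1 + c) = (3 + c) / 4 := by rw [ha_def]; field_simp
  set S : Set (ℝ × ℝ) := {z : ℝ × ℝ | t < z.1 ∧ t < c * z.1 + Real.sqrt (1 - c ^ 2) * z.2}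
    with hS_def
  have hS : MeasurableSet S := by
    have : S = {z : ℝ × ℝ | t < z.1} ∩ {z : ℝ × ℝ | t < c * z.1 + Real.sqrt (1 - c ^ 2) * z.2} :=
      rfl
    rw [this]
    exact (measurableSet_lt measurable_const measurable_fst).inter
      (measurableSet_lt measurable_const
        ((measurable_fst.const_mul c).add (measurable_snd.const_mul _)))
  have hmeas : ((gaussianReal 0 1).prod (gaussianReal 0 1)) S ≤
      ENNReal.ofReal (4 / (1 - c) * rexp (-a * t ^ 2)) := by
    rw [DR_prod_gaussian, withDensity_apply _ hS]
    have hpt : ∀ z ∈ S, gaussianPDF 0 1 z.1 * gaussianPDF 0 1 z.2 ≤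
        ENNReal.ofReal (rexp (-a * t ^ 2) * (2 * π)⁻¹) *
          (ENNReal.ofReal (rexp (-b * z.1 ^ 2)) * ENNReal.ofReal (rexp (-b * z.2 ^ 2))) := by
      rintro ⟨x, y⟩ ⟨hx, hy⟩
      have key : 2 * t ^ 2 ≤ (1 + c) * (x ^ 2 + y ^ 2) := DR_key c t x y hc hc' ht hx hy
      rw [gaussianPDF, gaussianPDF, ← ENNReal.ofReal_mul (gaussianPDFReal_nonneg _ _ _),
        ← ENNReal.ofReal_mul (by positivity), ← ENNReal.ofReal_mul (by positivity)]
      refine ENNReal.ofReal_le_ofReal ?_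
      simp only [gaussianPDFReal, NNReal.coe_one, mul_one, sub_zero]
      have h2pi : (0:ℝ) < 2 * π := by positivity
      have hsq : (√(2 * π))⁻¹ * rexp (-x ^ 2 / 2) * ((√(2 * π))⁻¹ * rexp (-y ^ 2 / 2)) =
          (2 * π)⁻¹ * rexp (-x ^ 2 / 2 + -y ^ 2 / 2) := by
        have h2 : (√(2 * π))⁻¹ * (√(2 * π))⁻¹ = (2 * π)⁻¹ := by
          rw [← mul_inv, Real.mul_self_sqrt h2pi.le]
        rw [Real.exp_add, ← h2]
        ring
      rw [hsq]
      have hexp : rexp (-x ^ 2 / 2 + -y ^ 2 / 2) ≤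
          rexp (-a * t ^ 2) * (rexp (-b * x ^ 2) * rexp (-b * y ^ 2)) := by
        rw [← Real.exp_add, ← Real.exp_add]
        refine Real.exp_le_exp.mpr ?_
        nlinarith [mul_le_mul_of_nonneg_left key ha0]
      calc (2 * π)⁻¹ * rexp (-x ^ 2 / 2 + -y ^ 2 / 2)
          ≤ (2 * π)⁻¹ * (rexp (-a * t ^ 2) * (rexp (-b * x ^ 2) * rexp (-b * y ^ 2))) := by
            exact mul_le_mul_of_nonneg_left hexp (by positivity)
        _ = rexp (-a * t ^ 2) * (2 * π)⁻¹ * (rexp (-b * x ^ 2) * rexp (-b * y ^ 2)) := by ring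
    calc ∫⁻ z in S, gaussianPDF 0 1 z.1 * gaussianPDF 0 1 z.2 ∂(volume.prod volume)
        ≤ ∫⁻ z in S, ENNReal.ofReal (rexp (-a * t ^ 2) * (2 * π)⁻¹) *
            (ENNReal.ofReal (rexp (-b * z.1 ^ 2)) * ENNReal.ofReal (rexp (-b * z.2 ^ 2)))
            ∂(volume.prod volume) := by
          refine setLIntegral_mono ?_ hpt
          exact (measurable_const.mul
            (((measurable_fst.pow_const 2).const_mul (-b)).exp.ennreal_ofReal.mul
              ((measurable_snd.pow_const 2).const_mul (-b)).exp.ennreal_ofReal))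
      _ ≤ ∫⁻ z, ENNReal.ofReal (rexp (-a * t ^ 2) * (2 * π)⁻¹) *
            (ENNReal.ofReal (rexp (-b * z.1 ^ 2)) * ENNReal.ofReal (rexp (-b * z.2 ^ 2)))
            ∂(volume.prod volume) := setLIntegral_le_lintegral _ _
      _ = ENNReal.ofReal (rexp (-a * t ^ 2) * (2 * π)⁻¹) *
            ∫⁻ z, ENNReal.ofReal (rexp (-b * z.1 ^ 2)) * ENNReal.ofReal (rexp (-b * z.2 ^ 2))
            ∂(volume.prod volume) := by
          rw [lintegral_const_mul]
          exact (((measurable_fst.pow_const 2).const_mul (-b)).exp.ennreal_ofReal.mul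
            ((measurable_snd.pow_const 2).const_mul (-b)).exp.ennreal_ofReal)
      _ = ENNReal.ofReal (rexp (-a * t ^ 2) * (2 * π)⁻¹) *
            ((∫⁻ x : ℝ, ENNReal.ofReal (rexp (-b * x ^ 2))) *
              ∫⁻ x : ℝ, ENNReal.ofReal (rexp (-b * x ^ 2))) := by
          congr 1
          exact lintegral_prod_mul
            (f := fun x : ℝ => ENNReal.ofReal (rexp (-b * x ^ 2)))
            (g := fun x : ℝ => ENNReal.ofReal (rexp (-b * x ^ 2)))
            ((measurable_id.pow_const 2).const_mul (-b)).exp.ennreal_ofReal.aemeasurable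
            ((measurable_id.pow_const 2).const_mul (-b)).exp.ennreal_ofReal.aemeasurable
      _ = ENNReal.ofReal (4 / (1 - c) * rexp (-a * t ^ 2)) := by
          have hint : (∫⁻ x : ℝ, ENNReal.ofReal (rexp (-b * x ^ 2))) =
              ENNReal.ofReal (√(π / b)) := by
            rw [← ofReal_integral_eq_lintegral_ofReal (integrable_exp_neg_mul_sq hb)
              (Filter.Eventually.of_forall fun x => (Real.exp_pos _).le), integral_gaussian]
          rw [hint, ← ENNReal.ofReal_mul (Real.sqrt_nonneg _),
            Real.mul_self_sqrt (by positivity), ← ENNReal.ofReal_mul (by positivity)]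
          congr 1
          have : π ≠ 0 := pi_ne_zero
          field_simp [hb_def]
          ring
  exact ENNReal.toReal_le_of_le_ofReal (by positivity) hmeas


lemma DR_denom (t : ℝ) (ht : 0 ≤ t) :
    (√(2 * π))⁻¹ * rexp (-(t + 1) ^ 2 / 2) ≤
      (((gaussianReal 0 1).prod (gaussianReal 0 1)) {z : ℝ × ℝ | t < z.1}).toReal := by
  have hset : {z : ℝ × ℝ | t < z.1} = Set.Ioi t ×ˢ Set.univ := by
    ext z; simp [Set.mem_prod]
  rw [hset, Measure.prod_prod, measure_univ, mul_one,
    gaussianReal_apply_eq_integral 0 one_ne_zero,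
    ENNReal.toReal_ofReal (setIntegral_nonneg measurableSet_Ioi fun x _ =>
      gaussianPDFReal_nonneg _ _ _)]
  set C : ℝ := (√(2 * π))⁻¹ * rexp (-(t + 1) ^ 2 / 2) with hC
  calc C = ∫ _ in Set.Ioc t (t + 1), C := by
        rw [setIntegral_const, Real.volume_real_Ioc]
        simp
    _ ≤ ∫ x in Set.Ioc t (t + 1), gaussianPDFReal 0 1 x := by
        refine setIntegral_mono_on (integrableOn_const (by
          rw [Real.volume_Ioc]; exact ENNReal.ofReal_lt_top.ne))
          ((integrable_gaussianPDFReal 0 1).integrableOn) measurableSet_Ioc ?_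
        intro x hx
        simp only [gaussianPDFReal, NNReal.coe_one, mul_one, sub_zero, hC]
        refine mul_le_mul_of_nonneg_left (Real.exp_le_exp.mpr ?_) (by positivity)
        have h1 := hx.1
        have h2 := hx.2
        nlinarith
    _ ≤ ∫ x in Set.Ioi t, gaussianPDFReal 0 1 x := by
        refine setIntegral_mono_set (integrable_gaussianPDFReal 0 1).integrableOn
          (Filter.Eventually.of_forall fun x => gaussianPDFReal_nonneg _ _ _) ?_
        exact HasSubset.Subset.eventuallyLE Set.Ioc_subset_Ioi_self


lemma DR_tendsto (c : ℝ) (hc : -1 < c) (hc' : c < 1) :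
    Tendsto (fun t : ℝ => (4 / (1 - c) * rexp (-((3 + c) / (4 * (1 + c))) * t ^ 2)) /
      ((√(2 * π))⁻¹ * rexp (-(t + 1) ^ 2 / 2))) atTop (nhds 0) := by
  set a : ℝ := (3 + c) / (4 * (1 + c)) with ha_def
  have h1c : (0:ℝ) < 1 + c := by linarith
  have ha2 : 1 / 2 < a := by
    rw [ha_def, lt_div_iff₀ (by positivity)]
    linarith
  have hU : ∀ t : ℝ, (4 / (1 - c) * rexp (-a * t ^ 2)) /
      ((√(2 * π))⁻¹ * rexp (-(t + 1) ^ 2 / 2)) =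
      (4 / (1 - c) * √(2 * π)) * rexp (t * ((1 / 2 - a) * t + 1) + 1 / 2) := by
    intro t
    have h2pi : (0:ℝ) < √(2 * π) := Real.sqrt_pos.mpr (by positivity)
    have hinv : ((√(2 * π))⁻¹ * rexp (-(t + 1) ^ 2 / 2))⁻¹ =
        √(2 * π) * rexp ((t + 1) ^ 2 / 2) := by
      rw [mul_inv, inv_inv, ← Real.exp_neg, neg_div, neg_neg]
    rw [div_eq_mul_inv, hinv]
    have : rexp (-a * t ^ 2) * rexp ((t + 1) ^ 2 / 2) =
        rexp (t * ((1 / 2 - a) * t + 1) + 1 / 2) := by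
      rw [← Real.exp_add]; ring_nf
    calc 4 / (1 - c) * rexp (-a * t ^ 2) * (√(2 * π) * rexp ((t + 1) ^ 2 / 2))
        = 4 / (1 - c) * √(2 * π) * (rexp (-a * t ^ 2) * rexp ((t + 1) ^ 2 / 2)) := by ring
      _ = _ := by rw [this]
  simp only [hU]
  rw [show (0:ℝ) = (4 / (1 - c) * √(2 * π)) * 0 by ring]
  refine Tendsto.const_mul _ ?_
  refine Real.tendsto_exp_atBot.comp ?_
  refine tendsto_atBot_add_const_right _ _ ?_
  refine Tendsto.atTop_mul_atBot₀ tendsto_id ?_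
  refine tendsto_atBot_add_const_right _ _ ?_
  exact Tendsto.const_mul_atTop_of_neg (by linarith) tendsto_id

/-- Davis–Resnick asymptotic independence in the upper tail for a bivariate normal
pair with correlation `|c| < 1`: with `Z₁, Z₂` independent standard normals,
`U = Z₁` and `V = c·Z₁ + √(1−c²)·Z₂`,
`P(U > t and V > t) / P(U > t) → 0` as `t → ∞`. -/
theorem bivariate_normal_asymptotic_independence (c : ℝ) (hc : -1 < c) (hc' : c < 1) :
    Tendsto
      (fun t : ℝ =>
        (((gaussianReal 0 1).prod (gaussianReal 0 1))
            {z : ℝ × ℝ | t < z.1 ∧ t < c * z.1 + Real.sqrt (1 - c ^ 2) * z.2}).toReal /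
          (((gaussianReal 0 1).prod (gaussianReal 0 1)) {z : ℝ × ℝ | t < z.1}).toReal)
      atTop (nhds 0) := by
  have h1c' : (0:ℝ) < 1 - c := by linarith
  refine tendsto_of_tendsto_of_tendsto_of_le_of_le' tendsto_const_nhds
    (DR_tendsto c hc hc') ?_ ?_
  · exact Eventually.of_forall fun t =>
      div_nonneg ENNReal.toReal_nonneg ENNReal.toReal_nonneg
  · filter_upwards [eventually_ge_atTop 0] with t ht
    exact div_le_div₀ (by positivity) (DR_numer c hc hc' t ht) (by positivity) (DR_denom t ht)
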